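/- For an odd positive integer N, an integer l with |l| > 2 and l ≡ 2 (mod N), the bijection ψ: Γ_{1,l}(N) → Q_l(N), γ ↦ q_γ, is equivariant for the Γ₁(N)-actions: for all δ ∈ Γ₁(N) and γ ∈ Γ_{1,l}(N), ψ(δ⁻¹γδ) = ψ(γ) ∘ δ, where (q ∘ δ)(X,Y) = q((X,Y)·δᵗ). Consequently ψ induces a bijection Γ_{1,l}(N)/Γ₁(N) ≅ Q_l(N)/Γ₁(N). -/
import Mathlib

/-- The congruence subgroup `Γ₁(N)`, as a set of integer 2×2 matrices. -/
def Gamma1Set (N : ℕ) : Set (Matrix (Fin 2) (Fin 2) ℤ) :=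
  {δ | δ.det = 1 ∧ (N : ℤ) ∣ (δ 0 0 - 1) ∧ (N : ℤ) ∣ (δ 1 1 - 1) ∧ (N : ℤ) ∣ δ 1 0}

/-- Matrices of `Γ₁(N)` with trace `l`. -/
def Gamma1lSet (N : ℕ) (l : ℤ) : Set (Matrix (Fin 2) (Fin 2) ℤ) :=
  {γ ∈ Gamma1Set N | γ.trace = l}

/-- `Q_l(N)`: integral binary quadratic forms `[A, B, C] = A X² + B XY + C Y²` with
`N ∣ A`, `N ∣ B` and discriminant `l² − 4`, encoded as coefficient triples. -/
def QlSet (N : ℕ) (l : ℤ) : Set (ℤ × ℤ × ℤ) :=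
  {q | (N : ℤ) ∣ q.1 ∧ (N : ℤ) ∣ q.2.1 ∧ q.2.1 ^ 2 - 4 * q.1 * q.2.2 = l ^ 2 - 4}

/-- The map `ψ : γ ↦ q_γ`. -/
def psiForm (γ : Matrix (Fin 2) (Fin 2) ℤ) : ℤ × ℤ × ℤ :=
  (γ 1 0, γ 1 1 - γ 0 0, -γ 0 1)

/-- The action of `δ = [[x,y],[z,t]]` on a form `q = [A,B,C]`:
`q ∘ δ = [q(x,z), B(xt+yz) + 2(Axy+Czt), q(y,t)]`, i.e. `(q ∘ δ)(X,Y) = q((X,Y)δᵗ)`. -/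
def formAct (q : ℤ × ℤ × ℤ) (δ : Matrix (Fin 2) (Fin 2) ℤ) : ℤ × ℤ × ℤ :=
  (q.1 * (δ 0 0) ^ 2 + q.2.1 * (δ 0 0) * (δ 1 0) + q.2.2 * (δ 1 0) ^ 2,
   q.2.1 * (δ 0 0 * δ 1 1 + δ 0 1 * δ 1 0) + 2 * (q.1 * δ 0 0 * δ 0 1 + q.2.2 * δ 1 0 * δ 1 1),
   q.1 * (δ 0 1) ^ 2 + q.2.1 * (δ 0 1) * (δ 1 1) + q.2.2 * (δ 1 1) ^ 2)

/-- The inverse (adjugate) of a determinant-one 2×2 matrix `δ`. -/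
def adjInv (δ : Matrix (Fin 2) (Fin 2) ℤ) : Matrix (Fin 2) (Fin 2) ℤ :=
  !![δ 1 1, -δ 0 1; -δ 1 0, δ 0 0]

section Aux

lemma mul_entry (P Q : Matrix (Fin 2) (Fin 2) ℤ) (i j : Fin 2) :
    (P * Q) i j = P i 0 * Q 0 j + P i 1 * Q 1 j := by
  simp [Matrix.mul_apply, Fin.sum_univ_two]

lemma adjInv_apply (δ : Matrix (Fin 2) (Fin 2) ℤ) :
    adjInv δ 0 0 = δ 1 1 ∧ adjInv δ 0 1 = -δ 0 1 ∧ adjInv δ 1 0 = -δ 1 0 ∧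
      adjInv δ 1 1 = δ 0 0 := by
  refine ⟨?_, ?_, ?_, ?_⟩ <;> simp [adjInv]

lemma equivar (δ γ : Matrix (Fin 2) (Fin 2) ℤ) :
    psiForm (adjInv δ * γ * δ) = formAct (psiForm γ) δ := by
  obtain ⟨h1, h2, h3, h4⟩ := adjInv_apply δ
  simp only [psiForm, formAct, mul_entry, h1, h2, h3, h4, Prod.mk.injEq]
  refine ⟨by ring, by ring, by ring⟩

lemma adjInv_mul (δ : Matrix (Fin 2) (Fin 2) ℤ) (h : δ.det = 1) :
    adjInv δ * δ = 1 := by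
  rw [Matrix.det_fin_two] at h
  obtain ⟨h1, h2, h3, h4⟩ := adjInv_apply δ
  ext i j
  revert i j
  simp only [Fin.forall_fin_two, mul_entry, h1, h2, h3, h4, Matrix.one_apply]
  norm_num
  refine ⟨⟨by linarith, by ring⟩, by ring, by linarith⟩

lemma mul_adjInv (δ : Matrix (Fin 2) (Fin 2) ℤ) (h : δ.det = 1) :
    δ * adjInv δ = 1 := by
  rw [Matrix.det_fin_two] at h
  obtain ⟨h1, h2, h3, h4⟩ := adjInv_apply δ
  ext i j
  revert i j
  simp only [Fin.forall_fin_two, mul_entry, h1, h2, h3, h4, Matrix.one_apply]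
  norm_num
  refine ⟨⟨by linarith, by ring⟩, by ring, by linarith⟩

lemma one_mem_Gamma1 (N : ℕ) : (1 : Matrix (Fin 2) (Fin 2) ℤ) ∈ Gamma1Set N := by
  refine ⟨by simp, ?_, ?_, ?_⟩ <;> simp [Matrix.one_apply]

lemma mul_mem_Gamma1 {N : ℕ} {δ δ' : Matrix (Fin 2) (Fin 2) ℤ}
    (h : δ ∈ Gamma1Set N) (h' : δ' ∈ Gamma1Set N) : δ * δ' ∈ Gamma1Set N := by
  obtain ⟨hd, ha, hb, hc⟩ := h
  obtain ⟨hd', ha', hb', hc'⟩ := h'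
  refine ⟨by rw [Matrix.det_mul, hd, hd', one_mul], ?_, ?_, ?_⟩
  · rw [mul_entry]
    have : δ 0 0 * δ' 0 0 + δ 0 1 * δ' 1 0 - 1 =
        (δ 0 0 - 1) * δ' 0 0 + (δ' 0 0 - 1) + δ 0 1 * δ' 1 0 := by ring
    rw [this]
    exact dvd_add (dvd_add (ha.mul_right _) ha') (hc'.mul_left _)
  · rw [mul_entry]
    have : δ 1 0 * δ' 0 1 + δ 1 1 * δ' 1 1 - 1 =
        δ 1 0 * δ' 0 1 + (δ 1 1 - 1) * δ' 1 1 + (δ' 1 1 - 1) := by ring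
    rw [this]
    exact dvd_add (dvd_add (hc.mul_right _) (hb.mul_right _)) hb'
  · rw [mul_entry]
    exact dvd_add (hc.mul_right _) (hc'.mul_left _)

lemma adjInv_mem_Gamma1 {N : ℕ} {δ : Matrix (Fin 2) (Fin 2) ℤ}
    (h : δ ∈ Gamma1Set N) : adjInv δ ∈ Gamma1Set N := by
  obtain ⟨hd, ha, hb, hc⟩ := h
  obtain ⟨h1, h2, h3, h4⟩ := adjInv_apply δ
  rw [Matrix.det_fin_two] at hd
  refine ⟨?_, ?_, ?_, ?_⟩
  · rw [Matrix.det_fin_two, h1, h2, h3, h4]; linarith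
  · rw [h1]; exact hb
  · rw [h4]; exact ha
  · rw [h3]; exact hc.neg_right

lemma adjInv_adjInv (δ : Matrix (Fin 2) (Fin 2) ℤ) : adjInv (adjInv δ) = δ := by
  obtain ⟨h1, h2, h3, h4⟩ := adjInv_apply δ
  obtain ⟨g1, g2, g3, g4⟩ := adjInv_apply (adjInv δ)
  ext i j
  revert i j
  simp only [Fin.forall_fin_two, g1, g2, g3, g4, h1, h2, h3, h4, neg_neg]
  refine ⟨⟨?_, ?_⟩, ?_, ?_⟩ <;> trivial

lemma formAct_one (q : ℤ × ℤ × ℤ) : formAct q 1 = q := by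
  simp [formAct, Matrix.one_apply]

lemma formAct_mul (q : ℤ × ℤ × ℤ) (δ δ' : Matrix (Fin 2) (Fin 2) ℤ) :
    formAct (formAct q δ) δ' = formAct q (δ * δ') := by
  simp only [formAct, mul_entry, Prod.mk.injEq]
  refine ⟨by ring, by ring, by ring⟩

lemma psiForm_mem {N : ℕ} {l : ℤ} {γ : Matrix (Fin 2) (Fin 2) ℤ}
    (h : γ ∈ Gamma1lSet N l) : psiForm γ ∈ QlSet N l := by
  obtain ⟨⟨hd, ha, hb, hc⟩, ht⟩ := h
  rw [Matrix.det_fin_two] at hd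
  rw [Matrix.trace_fin_two] at ht
  refine ⟨hc, ?_, ?_⟩
  · have : γ 1 1 - γ 0 0 = (γ 1 1 - 1) - (γ 0 0 - 1) := by ring
    rw [psiForm]; simp only; rw [this]; exact dvd_sub hb ha
  · simp only [psiForm]
    have : (γ 1 1 - γ 0 0) ^ 2 - 4 * γ 1 0 * -γ 0 1 =
        (γ 0 0 + γ 1 1) ^ 2 - 4 * (γ 0 0 * γ 1 1 - γ 0 1 * γ 1 0) := by ring
    rw [this, ht, hd]; ring

lemma trace_conj {l : ℤ} (δ γ : Matrix (Fin 2) (Fin 2) ℤ) (hd : δ.det = 1)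
    (ht : γ.trace = l) : (adjInv δ * γ * δ).trace = l := by
  rw [Matrix.trace_mul_comm, ← mul_assoc, mul_adjInv δ hd, one_mul, ht]

lemma psiForm_inj {l : ℤ} {γ γ' : Matrix (Fin 2) (Fin 2) ℤ}
    (ht : γ.trace = l) (ht' : γ'.trace = l) (h : psiForm γ = psiForm γ') : γ = γ' := by
  rw [Matrix.trace_fin_two] at ht ht'
  simp only [psiForm, Prod.mk.injEq] at h
  obtain ⟨e1, e2, e3⟩ := h
  ext i j
  revert i j
  simp only [Fin.forall_fin_two]
  refine ⟨⟨by omega, by omega⟩, by omega, by omega⟩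

end Aux

section Inv

variable (l : ℤ)

/-- Inverse of ψ. -/
def invPsi (q : ℤ × ℤ × ℤ) : Matrix (Fin 2) (Fin 2) ℤ :=
  !![(l - q.2.1) / 2, -q.2.2; q.1, (l + q.2.1) / 2]

lemma two_dvd_of_disc {A B C : ℤ} (h : B ^ 2 - 4 * A * C = l ^ 2 - 4) :
    (2 : ℤ) ∣ (l - B) := by
  rcases Int.even_or_odd (l - B) with he | ho
  · exact he.two_dvd
  · exfalso
    have h2 : (l - B) * (l + B) = 4 - 4 * A * C - (B^2 - 4*A*C - (l^2-4)) := by ring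
    rw [h, sub_self, sub_zero] at h2
    have hlb : Odd (l + B) := by
      have : l + B = (l - B) + 2 * B := by ring
      rw [this]; exact ho.add_even (even_two_mul B)
    have hodd : Odd ((l - B) * (l + B)) := ho.mul hlb
    rw [h2] at hodd
    have heven : Even (4 - 4 * A * C) := ⟨2 - 2 * A * C, by ring⟩
    exact (Int.not_odd_iff_even.mpr heven) hodd

lemma invPsi_mem {N : ℕ} (hN : Odd N) (hlN : (N : ℤ) ∣ (l - 2)) {q : ℤ × ℤ × ℤ}
    (hq : q ∈ QlSet N l) : invPsi l q ∈ Gamma1lSet N l := by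
  obtain ⟨A, B, C⟩ := q
  obtain ⟨hA, hB, hdisc⟩ := hq
  simp only at hA hB hdisc
  obtain ⟨m, hm⟩ := two_dvd_of_disc l hdisc
  have hm2 : l + B = 2 * (l - m) := by omega
  have e00 : invPsi l (A, B, C) 0 0 = m := by
    simp [invPsi, hm]
  have e11 : invPsi l (A, B, C) 1 1 = l - m := by
    simp [invPsi, hm2]
  have e01 : invPsi l (A, B, C) 0 1 = -C := by simp [invPsi]
  have e10 : invPsi l (A, B, C) 1 0 = A := by simp [invPsi]
  have hdet : m * (l - m) - (-C) * A = 1 := by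
    have h4 : (2 * m) * (2 * (l - m)) = 4 - 4 * A * C := by
      rw [← hm, ← hm2]; linarith [hdisc]
    nlinarith [h4]
  have hcop : IsCoprime (N : ℤ) 2 := by
    rcases hN with ⟨k, hk⟩
    refine ⟨-1, (k + 1 : ℤ), ?_⟩
    push_cast [hk]; ring
  refine ⟨⟨?_, ?_, ?_, ?_⟩, ?_⟩
  · rw [Matrix.det_fin_two, e00, e11, e01, e10]; linarith
  · rw [e00]
    have : (N : ℤ) ∣ (m - 1) * 2 := by
      have h2 : (m - 1) * 2 = (l - 2) - B := by omega
      rw [h2]; exact dvd_sub hlN hB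
    exact hcop.dvd_of_dvd_mul_right this
  · rw [e11]
    have : (N : ℤ) ∣ (l - m - 1) * 2 := by
      have h2 : (l - m - 1) * 2 = (l - 2) + B := by omega
      rw [h2]; exact dvd_add hlN hB
    exact hcop.dvd_of_dvd_mul_right this
  · rw [e10]; exact hA
  · rw [Matrix.trace_fin_two, e00, e11]; ring

lemma psiForm_invPsi {N : ℕ} {q : ℤ × ℤ × ℤ} (hq : q ∈ QlSet N l) :
    psiForm (invPsi l q) = q := by
  obtain ⟨A, B, C⟩ := q
  obtain ⟨hA, hB, hdisc⟩ := hq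
  simp only at hA hB hdisc
  obtain ⟨m, hm⟩ := two_dvd_of_disc l hdisc
  have hm2 : l + B = 2 * (l - m) := by omega
  have e00 : invPsi l (A, B, C) 0 0 = m := by simp [invPsi, hm]
  have e11 : invPsi l (A, B, C) 1 1 = l - m := by simp [invPsi, hm2]
  have e01 : invPsi l (A, B, C) 0 1 = -C := by simp [invPsi]
  have e10 : invPsi l (A, B, C) 1 0 = A := by simp [invPsi]
  simp only [psiForm, e00, e11, e01, e10, Prod.mk.injEq]
  refine ⟨by trivial, by omega, neg_neg C⟩

end Inv

/-- `ψ` is equivariant: `ψ(δ⁻¹γδ) = ψ(γ) ∘ δ` for `δ ∈ Γ₁(N)`,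
`γ ∈ Γ_{1,l}(N)`; consequently it induces a bijection
`Γ_{1,l}(N)/Γ₁(N) ≅ Q_l(N)/Γ₁(N)`. -/
theorem psi_equivariant_and_quotient_bij (N : ℕ) (hN : Odd N) (hNpos : 0 < N) (l : ℤ)
    (hl : 2 < |l|) (hlN : (N : ℤ) ∣ (l - 2)) :
    (∀ δ ∈ Gamma1Set N, ∀ γ ∈ Gamma1lSet N l,
        psiForm (adjInv δ * γ * δ) = formAct (psiForm γ) δ) ∧
    ∃ F : Quot (fun γ γ' : {γ // γ ∈ Gamma1lSet N l} =>
            ∃ δ ∈ Gamma1Set N, γ'.val = adjInv δ * γ.val * δ) →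
          Quot (fun q q' : {q // q ∈ QlSet N l} =>
            ∃ δ ∈ Gamma1Set N, q'.val = formAct q.val δ),
      Function.Bijective F ∧
      ∀ (γ : {γ // γ ∈ Gamma1lSet N l}) (q : {q // q ∈ QlSet N l}),
        q.val = psiForm γ.val → F (Quot.mk _ γ) = Quot.mk _ q := by
  set R : {γ // γ ∈ Gamma1lSet N l} → {γ // γ ∈ Gamma1lSet N l} → Prop :=
    fun γ γ' => ∃ δ ∈ Gamma1Set N, γ'.val = adjInv δ * γ.val * δ with hR
  set R' : {q // q ∈ QlSet N l} → {q // q ∈ QlSet N l} → Prop :=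
    fun q q' => ∃ δ ∈ Gamma1Set N, q'.val = formAct q.val δ with hR'
  -- R' is an equivalence
  have hR'equiv : Equivalence R' := by
    constructor
    · intro q; exact ⟨1, one_mem_Gamma1 N, (formAct_one q.val).symm⟩
    · rintro q q' ⟨δ, hδ, hq'⟩
      refine ⟨adjInv δ, adjInv_mem_Gamma1 hδ, ?_⟩
      rw [hq', formAct_mul, mul_adjInv δ hδ.1, formAct_one]
    · rintro q q' q'' ⟨δ, hδ, hq'⟩ ⟨δ', hδ', hq''⟩
      exact ⟨δ * δ', mul_mem_Gamma1 hδ hδ', by rw [hq'', hq', formAct_mul]⟩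
  -- equivariance
  have hequiv : ∀ δ ∈ Gamma1Set N, ∀ γ ∈ Gamma1lSet N l,
      psiForm (adjInv δ * γ * δ) = formAct (psiForm γ) δ :=
    fun δ _ γ _ => equivar δ γ
  refine ⟨hequiv, ?_⟩
  -- the map F
  have hlift : ∀ (γ γ' : {γ // γ ∈ Gamma1lSet N l}), R γ γ' →
      (Quot.mk R' ⟨psiForm γ.val, psiForm_mem γ.prop⟩ : Quot R') =
        Quot.mk R' ⟨psiForm γ'.val, psiForm_mem γ'.prop⟩ := by
    rintro γ γ' ⟨δ, hδ, hγ'⟩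
    apply Quot.sound
    refine ⟨δ, hδ, ?_⟩
    simp only [hγ', equivar δ γ.val]
  refine ⟨Quot.lift (fun γ => Quot.mk R' ⟨psiForm γ.val, psiForm_mem γ.prop⟩) hlift, ⟨?_, ?_⟩, ?_⟩
  · -- injective
    intro x y
    refine Quot.induction_on x (fun γ => ?_)
    refine Quot.induction_on y (fun γ' => ?_)
    intro h
    simp only [Quot.lift_mk] at h
    rw [Quot.eq] at h
    rw [hR'equiv.eqvGen_iff] at h
    obtain ⟨δ, hδ, hf⟩ := h
    apply Quot.sound
    refine ⟨δ, hδ, ?_⟩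
    simp only at hf
    rw [← equivar δ γ.val] at hf
    exact psiForm_inj (trace_conj δ γ.val hδ.1 γ.prop.2) γ'.prop.2 hf.symm |>.symm ▸ rfl
  · -- surjective
    intro y
    refine Quot.induction_on y (fun q => ?_)
    refine ⟨Quot.mk R ⟨invPsi l q.val, invPsi_mem l hN hlN q.prop⟩, ?_⟩
    simp only [Quot.lift_mk]
    congr 1
    exact Subtype.ext (psiForm_invPsi l q.prop)
  · -- compatibility
    intro γ q hq
    simp only [Quot.lift_mk]
    congr 1
    exact Subtype.ext hq.symm
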